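/- Let λ > 0 and define g(x,y) = (x^2+y^2)^{1/2} · (1 + λ (x^2 − 2y^2)/(x^2+y^2))^2 for (x,y) ≠ (0,0), g(0,0) = 0. Then g is convex on R^2 if and only if λ ≤ 1/11. -/

import Mathlib

set_option maxHeartbeats 2000000

private theorem keyAB (lam c s a b : ℝ) (hc : c^2+s^2 = 1) (ha : a^2+b^2 = 1)
    (h0 : 0 < lam) (h1 : lam ≤ 1/11) :
    ((c*(a^2-b^2) + s*(2*a*b))*c + (s*(a^2-b^2) - c*(2*a*b))*s) * (1+lam*(1-3*s^2))^2
      + 12*lam*(1+lam*(1-3*s^2))*(c*s)*((c*(a^2-b^2) + s*(2*a*b))*s - (s*(a^2-b^2) - c*(2*a*b))*c)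
      ≤ (1+lam*(1-3*(s*(a^2-b^2) - c*(2*a*b))^2))^2 := by
  have hM : (1+lam*(1-3*s^2)) - 12*lam*(a*((c^2-s^2)*a+2*s*c*b)) - (1-11*lam)
      = 9*lam*s^2 + 3*lam*((c^2-s^2-(a^2-b^2))^2 + (2*s*c-2*a*b)^2) := by
    linear_combination ((-3)*lam + (-6)*lam*b^2 + (-6)*lam*a^2 + (-3)*lam*s^2 + (-3)*lam*c^2) * hc
      + ((-9)*lam + (-3)*lam*b^2 + (-3)*lam*a^2 + 12*lam*s^2) * ha
  have hM' : 0 ≤ (1+lam*(1-3*s^2)) - 12*lam*(a*((c^2-s^2)*a+2*s*c*b)) := by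
    nlinarith [hM, mul_nonneg h0.le (sq_nonneg s),
      mul_nonneg h0.le (sq_nonneg (c^2-s^2-(a^2-b^2))),
      mul_nonneg h0.le (sq_nonneg (2*s*c-2*a*b))]
  have hu : 0 ≤ 1+lam*(1-3*s^2) := by
    nlinarith [mul_nonneg h0.le (sq_nonneg c), mul_nonneg h0.le (sq_nonneg s)]
  have hprod : 0 ≤ (1+lam*(1-3*s^2)) * ((1+lam*(1-3*s^2)) - 12*lam*(a*((c^2-s^2)*a+2*s*c*b))) :=
    mul_nonneg hu hM'
  have hW : 0 ≤ 18*lam^2*a^2*(2*s*c*(a^2-b^2) - (c^2-s^2)*(2*a*b))^2 := by positivity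
  have hE : (1+lam*(1-3*(s*(a^2-b^2) - c*(2*a*b))^2))^2
      - ((c*(a^2-b^2) + s*(2*a*b))*c + (s*(a^2-b^2) - c*(2*a*b))*s) * (1+lam*(1-3*s^2))^2
      - 12*lam*(1+lam*(1-3*s^2))*(c*s)*((c*(a^2-b^2) + s*(2*a*b))*s - (s*(a^2-b^2) - c*(2*a*b))*c)
      = 2*b^2*((1+lam*(1-3*s^2)) * ((1+lam*(1-3*s^2)) - 12*lam*(a*((c^2-s^2)*a+2*s*c*b)))
          + 18*lam^2*a^2*(2*s*c*(a^2-b^2) - (c^2-s^2)*(2*a*b))^2) := by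
    linear_combination (1*b^2 + (-1)*a^2 + 2*lam*b^2 + (-2)*lam*a^2 + (-6)*lam*s^2*b^2 + 6*lam*s^2*a^2 + (-24)*lam*c*s*a*b + 1*lam^2*b^2 + (-1)*lam^2*a^2 + (-6)*lam^2*s^2*b^2 + 6*lam^2*s^2*a^2 + (-72)*lam^2*s^2*a^2*b^2 + 72*lam^2*s^2*a^2*b^6 + 144*lam^2*s^2*a^4*b^4 + 72*lam^2*s^2*a^6*b^2 + 9*lam^2*s^4*b^2 + (-9)*lam^2*s^4*a^2 + (-24)*lam^2*c*s*a*b + 72*lam^2*c*s^3*a*b) * hc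
      + ((-1) + (-2)*lam + (-6)*lam*s^2*b^2 + (-6)*lam*s^2*a^2 + 24*lam*c*s*a*b + (-1)*lam^2 + (-6)*lam^2*s^2*b^2 + (-6)*lam^2*s^2*a^2 + 72*lam^2*s^2*a^2*b^2 + 72*lam^2*s^2*a^2*b^4 + 72*lam^2*s^2*a^4*b^2 + 9*lam^2*s^4*b^2 + 9*lam^2*s^4*b^4 + 9*lam^2*s^4*b^6 + 9*lam^2*s^4*a^2 + (-126)*lam^2*s^4*a^2*b^2 + (-117)*lam^2*s^4*a^2*b^4 + 9*lam^2*s^4*a^4 + (-117)*lam^2*s^4*a^4*b^2 + 9*lam^2*s^4*a^6 + 24*lam^2*c*s*a*b + (-72)*lam^2*c*s^3*a*b + 72*lam^2*c*s^3*a*b^3 + 72*lam^2*c*s^3*a*b^5 + (-72)*lam^2*c*s^3*a^3*b + (-72)*lam^2*c*s^3*a^5*b) * ha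
  nlinarith [hE, mul_nonneg (mul_nonneg (by norm_num : (0:ℝ) ≤ 2) (sq_nonneg b)) (add_nonneg hprod hW)]

private theorem halfangle (m n : ℝ) (h : m^2+n^2 = 1) :
    ∃ a b : ℝ, a^2+b^2 = 1 ∧ m = a^2-b^2 ∧ n = 2*a*b := by
  by_cases hm : m = -1
  · have hn : n = 0 := by nlinarith [sq_nonneg n]
    exact ⟨0, 1, by norm_num, by rw [hm]; norm_num, by rw [hn]; ring⟩
  · have hm1 : -1 ≤ m := by nlinarith [sq_nonneg n]
    have h1m : 0 < 1+m := by rcases lt_of_le_of_ne hm1 (Ne.symm hm) with h'; linarith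
    have h2 : (0:ℝ) < (1+m)/2 := by linarith
    set a := Real.sqrt ((1+m)/2) with ha_def
    have ha2 : a^2 = (1+m)/2 := Real.sq_sqrt h2.le
    have ha0 : 0 < a := Real.sqrt_pos.2 h2
    refine ⟨a, n/(2*a), ?_, ?_, ?_⟩
    · field_simp
      nlinarith [ha2]
    · field_simp
      nlinarith [ha2]
    · field_simp

private theorem keyE (lam c s C S : ℝ) (hc : c^2+s^2 = 1) (hC : C^2+S^2 = 1)
    (h0 : 0 < lam) (h1 : lam ≤ 1/11) :
    (C*c+S*s) * (1+lam*(1-3*s^2))^2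
      + 12*lam*(1+lam*(1-3*s^2))*(c*s)*(C*s-S*c)
      ≤ (1+lam*(1-3*S^2))^2 := by
  have hmn : (C*c+S*s)^2 + (C*s-S*c)^2 = 1 := by linear_combination (C^2+S^2) * hc + hC
  obtain ⟨a, b, hab, hm, hn⟩ := halfangle (C*c+S*s) (C*s-S*c) hmn
  have hCe : C = c*(a^2-b^2) + s*(2*a*b) := by
    have : C = c*(C*c+S*s) + s*(C*s-S*c) := by linear_combination (-C) * hc
    rw [this, ← hm, ← hn]
  have hSe : S = s*(a^2-b^2) - c*(2*a*b) := by
    have : S = s*(C*c+S*s) - c*(C*s-S*c) := by linear_combination (-S) * hc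
    rw [this, ← hm, ← hn]
  rw [hCe, hSe]
  exact keyAB lam c s a b hc hab h0 h1

private theorem gkey (lam : ℝ) (h0 : 0 < lam) (h1 : lam ≤ 1/11)
    (g : ℝ × ℝ → ℝ)
    (hg : ∀ p : ℝ × ℝ, p ≠ 0 →
      g p = (p.1 ^ 2 + p.2 ^ 2) ^ ((1 : ℝ) / 2) *
        (1 + lam * (p.1 ^ 2 - 2 * p.2 ^ 2) / (p.1 ^ 2 + p.2 ^ 2)) ^ 2)
    (hg0 : g 0 = 0) (c s : ℝ) (hcs : c^2+s^2 = 1) (x : ℝ × ℝ) :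
    x.1 * (c*(1+lam*(1-3*s^2))^2 + 12*lam*(1+lam*(1-3*s^2))*c*s^2)
      + x.2 * (s*(1+lam*(1-3*s^2))^2 - 12*lam*(1+lam*(1-3*s^2))*c^2*s) ≤ g x := by
  by_cases hx : x = 0
  · have h1 : x.1 = 0 := by rw [hx]; rfl
    have h2 : x.2 = 0 := by rw [hx]; rfl
    rw [h1, h2, hx, hg0]; norm_num
  · have hx2pos : 0 < x.1^2 + x.2^2 := by
      have : x.1 ≠ 0 ∨ x.2 ≠ 0 := by
        by_contra hcon
        push_neg at hcon
        exact hx (Prod.ext hcon.1 hcon.2)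
      rcases this with h | h
      · have := pow_two_pos_of_ne_zero h; nlinarith [sq_nonneg x.2]
      · have := pow_two_pos_of_ne_zero h; nlinarith [sq_nonneg x.1]
    set R := Real.sqrt (x.1^2+x.2^2) with hRdef
    have hR0 : 0 < R := Real.sqrt_pos.2 hx2pos
    have hR2 : R^2 = x.1^2+x.2^2 := Real.sq_sqrt hx2pos.le
    set C := x.1/R with hCdef
    set S := x.2/R with hSdef
    have hCS : C^2+S^2 = 1 := by
      rw [hCdef, hSdef, div_pow, div_pow, ← add_div, ← hR2]
      exact div_self (by positivity)
    have hx1 : R * C = x.1 := by rw [hCdef, mul_div_cancel₀ x.1 hR0.ne']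
    have hx2 : R * S = x.2 := by rw [hSdef, mul_div_cancel₀ x.2 hR0.ne']
    have hgx : g x = R * (1+lam*(1-3*S^2))^2 := by
      rw [hg x hx, ← Real.sqrt_eq_rpow]
      have h13 : 1-3*S^2 = (x.1^2 - 2*x.2^2) / (x.1^2 + x.2^2) := by
        rw [hSdef, div_pow, hR2]
        field_simp
        ring
      rw [h13, ← mul_div_assoc]
    calc x.1 * (c*(1+lam*(1-3*s^2))^2 + 12*lam*(1+lam*(1-3*s^2))*c*s^2)
        + x.2 * (s*(1+lam*(1-3*s^2))^2 - 12*lam*(1+lam*(1-3*s^2))*c^2*s)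
        = R * ((C*c+S*s) * (1+lam*(1-3*s^2))^2
            + 12*lam*(1+lam*(1-3*s^2))*(c*s)*(C*s-S*c)) := by
          rw [← hx1, ← hx2]; ring
      _ ≤ R * (1+lam*(1-3*S^2))^2 :=
          mul_le_mul_of_nonneg_left (keyE lam c s C S hcs hCS h0 h1) hR0.le
      _ = g x := hgx.symm

theorem stmt5 (lam : ℝ) (hlam : 0 < lam)
    (g : ℝ × ℝ → ℝ)
    (hg : ∀ p : ℝ × ℝ, p ≠ 0 →
      g p = (p.1 ^ 2 + p.2 ^ 2) ^ ((1 : ℝ) / 2) *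
        (1 + lam * (p.1 ^ 2 - 2 * p.2 ^ 2) / (p.1 ^ 2 + p.2 ^ 2)) ^ 2)
    (hg0 : g 0 = 0) :
    ConvexOn ℝ Set.univ g ↔ lam ≤ 1 / 11 := by
  constructor
  · -- convex → lam ≤ 1/11
    intro hconv
    by_contra hgt
    push_neg at hgt
    set t : ℝ := (11*lam-1)/(20*(1+lam)^2) with htdef
    have hmu : 0 < 11*lam-1 := by linarith
    have hden : (0:ℝ) < 20*(1+lam)^2 := by positivity
    have ht : 0 < t := div_pos hmu hden
    set e : ℝ := Real.sqrt t with hedef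
    have he2 : e^2 = t := Real.sq_sqrt ht.le
    have hne : ((1:ℝ), e) ≠ (0 : ℝ × ℝ) := by
      intro h
      have : (1:ℝ) = 0 := congrArg Prod.fst h
      norm_num at this
    have hne' : ((1:ℝ), -e) ≠ (0 : ℝ × ℝ) := by
      intro h
      have : (1:ℝ) = 0 := congrArg Prod.fst h
      norm_num at this
    have hne0 : ((1:ℝ), (0:ℝ)) ≠ (0 : ℝ × ℝ) := by
      intro h
      have : (1:ℝ) = 0 := congrArg Prod.fst h
      norm_num at this
    have hpt : ((1:ℝ)/2) • ((1:ℝ), e) + ((1:ℝ)/2) • ((1:ℝ), -e) = ((1:ℝ), (0:ℝ)) := by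
      rw [Prod.smul_mk, Prod.smul_mk, Prod.mk_add_mk]
      norm_num
    have hcx := hconv.2 (Set.mem_univ ((1:ℝ), e)) (Set.mem_univ ((1:ℝ), -e))
      (by norm_num : (0:ℝ) ≤ 1/2) (by norm_num : (0:ℝ) ≤ 1/2) (by norm_num : (1:ℝ)/2 + 1/2 = 1)
    rw [hpt] at hcx
    have hval0 : g ((1:ℝ), (0:ℝ)) = (1+lam)^2 := by
      rw [hg _ hne0]
      norm_num [Real.one_rpow]
    have hvale : g ((1:ℝ), e) = Real.sqrt (1+t) * (1 + lam*(1-2*t)/(1+t))^2 := by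
      rw [hg _ hne]
      rw [← Real.sqrt_eq_rpow]
      rw [show (1:ℝ)^2 + e^2 = 1 + t by linear_combination he2]
      rw [show (1:ℝ)^2 - 2*e^2 = 1-2*t by linear_combination (-2)*he2]
      try rw [mul_div_assoc]
    have hvale' : g ((1:ℝ), -e) = g ((1:ℝ), e) := by
      rw [hg _ hne, hg _ hne']
      norm_num
    rw [hval0, hvale', hvale] at hcx
    simp only [smul_eq_mul] at hcx
    have hmid : (1+lam)^2 ≤ Real.sqrt (1+t) * (1 + lam*(1-2*t)/(1+t))^2 := by linarith
    -- square both sides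
    have h1t : (0:ℝ) < 1+t := by linarith
    have hsq : (1+lam)^4 ≤ (1+t) * (1 + lam*(1-2*t)/(1+t))^4 := by
      have h2 := mul_self_le_mul_self (by positivity) hmid
      have h3 : Real.sqrt (1+t) * Real.sqrt (1+t) = 1+t := Real.mul_self_sqrt h1t.le
      nlinarith [h2, h3]
    have hA : 1 + lam*(1-2*t)/(1+t) = (1+lam-(2*lam-1)*t)/(1+t) := by
      field_simp
      ring
    rw [hA] at hsq
    have hsq2 : (1+lam)^4 * (1+t)^3 ≤ (1+lam-(2*lam-1)*t)^4 := by
      rw [div_pow] at hsq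
      rw [show ((1:ℝ)+t)^4 = (1+t)*(1+t)^3 by ring] at hsq
      calc (1+lam)^4 * (1+t)^3 ≤ ((1+t) * ((1+lam-(2*lam-1)*t)^4 / ((1+t)*(1+t)^3))) * (1+t)^3 := by
            nlinarith [pow_pos h1t 3]
        _ = (1+lam-(2*lam-1)*t)^4 := by field_simp
    -- contradiction with polynomial inequality
    have hKey : ((1+lam)*(20*(1+lam)^2)-(2*lam-1)*(11*lam-1))^4
        < (1+lam)^4 * (20*(1+lam)^2 + (11*lam-1))^3 * (20*(1+lam)^2) := by
      nlinarith [pow_pos hmu 2, pow_pos hmu 3, pow_pos hmu 4, pow_pos hmu 5, pow_pos hmu 6,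
        pow_pos hmu 7, pow_pos hmu 8, pow_pos hmu 9, pow_pos hmu 10, pow_pos hmu 11]
    have hpoly : (1+lam-(2*lam-1)*t)^4 < (1+lam)^4 * (1+t)^3 := by
      rw [htdef]
      rw [show (1:ℝ) + (11*lam-1)/(20*(1+lam)^2) = (20*(1+lam)^2 + (11*lam-1))/(20*(1+lam)^2) by field_simp]
      rw [show (1:ℝ)+lam-(2*lam-1)*((11*lam-1)/(20*(1+lam)^2)) = ((1+lam)*(20*(1+lam)^2)-(2*lam-1)*(11*lam-1))/(20*(1+lam)^2) by first | (field_simp; ring) | field_simp]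
      rw [div_pow, div_pow, ← mul_div_assoc, div_lt_div_iff₀ (by positivity) (by positivity)]
      nlinarith [hKey, pow_pos hden 3, mul_pos (pow_pos hden 3) hden]
    linarith
  · -- lam ≤ 1/11 → convex
    intro hle
    have gnn : ∀ x : ℝ × ℝ, 0 ≤ g x := by
      intro x
      by_cases hx : x = 0
      · rw [hx, hg0]
      · rw [hg x hx]; positivity
    refine ⟨convex_univ, ?_⟩
    intro p _ q _ t1 t2 ht1 ht2 hsum
    simp only [smul_eq_mul]
    by_cases hw : t1 • p + t2 • q = 0
    · rw [hw, hg0]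
      exact add_nonneg (mul_nonneg ht1 (gnn p)) (mul_nonneg ht2 (gnn q))
    · set w := t1 • p + t2 • q with hwdef
      have hw2pos : 0 < w.1^2 + w.2^2 := by
        have : w.1 ≠ 0 ∨ w.2 ≠ 0 := by
          by_contra hcon
          push_neg at hcon
          exact hw (Prod.ext hcon.1 hcon.2)
        rcases this with h | h
        · have := pow_two_pos_of_ne_zero h; nlinarith [sq_nonneg w.2]
        · have := pow_two_pos_of_ne_zero h; nlinarith [sq_nonneg w.1]
      obtain ⟨r, hrdef⟩ : ∃ r, r = Real.sqrt (w.1^2+w.2^2) := ⟨_, rfl⟩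
      have hr0 : 0 < r := hrdef ▸ Real.sqrt_pos.2 hw2pos
      have hr2 : r^2 = w.1^2+w.2^2 := hrdef ▸ Real.sq_sqrt hw2pos.le
      obtain ⟨c, hcdef⟩ : ∃ c, c = w.1/r := ⟨_, rfl⟩
      obtain ⟨s, hsdef⟩ : ∃ s, s = w.2/r := ⟨_, rfl⟩
      have hcs : c^2+s^2 = 1 := by
        rw [hcdef, hsdef, div_pow, div_pow, ← add_div, ← hr2]
        exact div_self (by positivity)
      have hw1 : r * c = w.1 := by rw [hcdef, mul_div_cancel₀ w.1 hr0.ne']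
      have hw2 : r * s = w.2 := by rw [hsdef, mul_div_cancel₀ w.2 hr0.ne']
      -- value of g at w
      have hgw : g w = r * (1+lam*(1-3*s^2))^2 := by
        rw [hg w hw]
        have h13 : 1-3*s^2 = (w.1^2 - 2*w.2^2) / (w.1^2 + w.2^2) := by
          rw [hsdef, div_pow, hr2]
          field_simp
          ring
        rw [← Real.sqrt_eq_rpow, h13, ← mul_div_assoc, ← hrdef]
      -- Euler identity
      have heuler : g w = w.1 * (c*(1+lam*(1-3*s^2))^2 + 12*lam*(1+lam*(1-3*s^2))*c*s^2)
          + w.2 * (s*(1+lam*(1-3*s^2))^2 - 12*lam*(1+lam*(1-3*s^2))*c^2*s) := by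
        rw [hgw, ← hw1, ← hw2]
        linear_combination (-(r*(1+lam*(1-3*s^2))^2)) * hcs
      have hp := gkey lam hlam hle g hg hg0 c s hcs p
      have hq := gkey lam hlam hle g hg hg0 c s hcs q
      have hwc1 : w.1 = t1 * p.1 + t2 * q.1 := by
        rw [hwdef]; simp [Prod.fst_add]
      have hwc2 : w.2 = t1 * p.2 + t2 * q.2 := by
        rw [hwdef]; simp [Prod.snd_add]
      have expand : g w = t1 * (p.1 * (c*(1+lam*(1-3*s^2))^2 + 12*lam*(1+lam*(1-3*s^2))*c*s^2)
            + p.2 * (s*(1+lam*(1-3*s^2))^2 - 12*lam*(1+lam*(1-3*s^2))*c^2*s))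
          + t2 * (q.1 * (c*(1+lam*(1-3*s^2))^2 + 12*lam*(1+lam*(1-3*s^2))*c*s^2)
            + q.2 * (s*(1+lam*(1-3*s^2))^2 - 12*lam*(1+lam*(1-3*s^2))*c^2*s)) := by
        rw [heuler, hwc1, hwc2]; ring
      rw [expand]
      have h1 := mul_le_mul_of_nonneg_left hp ht1
      have h2 := mul_le_mul_of_nonneg_left hq ht2
      linarith
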